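/- For every real x > 0, every real h ≥ 1 and every integer k ≥ 1, the following are equivalent: (i) the generalized Hilbert matrix A_k(x,h) is positive semidefinite; (ii) det A_k(x,h) ≥ 0; (iii) f_k ≥ 0, where f_k is obtained from the recursion f_0 := x, f_{ℓ+1} := f_ℓ·((k−ℓ)h+1)^2/((k−ℓ)h)^2 − (2(k−ℓ)h+1)/((k−ℓ)h)^2 for 0 ≤ ℓ ≤ k−1; (iv) x ≥ b(k,h). -/

import Mathlib

/-- The generalized Hilbert matrix `A_k(x,h)`: a `(k+1) × (k+1)` real matrix whose
`(i,j)` entry (0-based) is `x` if `i = j = 0` and `1/((i+j)h+1)` otherwise. -/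
noncomputable def genHilbert (k : ℕ) (x h : ℝ) : Matrix (Fin (k + 1)) (Fin (k + 1)) ℝ :=
  fun i j =>
    if i = 0 ∧ j = 0 then x
    else 1 / ((((i : ℕ) : ℝ) + ((j : ℕ) : ℝ)) * h + 1)

/-- The constants `b(j,h)`: `b(1,h) = (2h+1)/(h+1)²` and, for `j ≥ 2`,
`b(j,h) = (b(j-1,h) + (2jh+1)/(jh)²) · (jh/(jh+1))²`.  (The value at `j = 0`
is irrelevant and set to `0`.) -/
noncomputable def bGH (h : ℝ) : ℕ → ℝ
  | 0 => 0
  | 1 => (2 * h + 1) / (h + 1) ^ 2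
  | (j + 2) =>
      (bGH h (j + 1) + (2 * ((j : ℝ) + 2) * h + 1) / ((((j : ℝ) + 2) * h) ^ 2)) *
        ((((j : ℝ) + 2) * h) / (((j : ℝ) + 2) * h + 1)) ^ 2

open Matrix

section Step
variable (h : ℝ) (k : ℕ) (x : ℝ)

noncomputable def vGH : Fin (k+1) → ℝ := fun i => 1 / ((((i:ℕ):ℝ) + ((k:ℝ)+1)) * h + 1)

noncomputable def BGH : Matrix (Fin (k+1)) (Fin 1) ℝ := fun i _ => vGH h k i

noncomputable def DGH : Matrix (Fin 1) (Fin 1) ℝ :=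
  Matrix.diagonal (fun _ => 1 / (2 * ((k:ℝ)+1) * h + 1))

lemma genHilbert_block :
    (genHilbert (k+1) x h).submatrix finSumFinEquiv finSumFinEquiv
      = Matrix.fromBlocks (genHilbert k x h) (BGH h k) (BGH h k)ᴴ (DGH h k) := by
  ext i j
  rcases i with i | i <;> rcases j with j | j <;>
    simp [Matrix.submatrix_apply, genHilbert, BGH, vGH, DGH, Matrix.fromBlocks,
      finSumFinEquiv, Fin.ext_iff, Fin.val_eq_zero, -Fin.val_eq_zero_iff]
  · left; ring
  · fin_cases i <;> fin_cases j
    rw [Matrix.diagonal_apply_eq]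
    ring_nf

noncomputable def dGH : Fin (k+1) → ℝ :=
  fun i => ((((i:ℕ):ℝ) - ((k:ℝ)+1)) * h) / ((((i:ℕ):ℝ) + ((k:ℝ)+1)) * h + 1)

noncomputable def xGH : ℝ :=
  x * (((k:ℝ)+1) * h + 1) ^ 2 / ((((k:ℝ)+1) * h) ^ 2)
    - (2 * ((k:ℝ)+1) * h + 1) / ((((k:ℝ)+1) * h) ^ 2)

lemma schur_eq (hh : 0 < h) :
    genHilbert k x h - BGH h k * (DGH h k)⁻¹ * (BGH h k)ᴴ
      = Matrix.diagonal (dGH h k) * genHilbert k (xGH h k x) h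
          * (Matrix.diagonal (dGH h k))ᴴ := by
  have ha : (2 * ((k:ℝ)+1) * h + 1) ≠ 0 := by positivity
  have hDinv : (DGH h k)⁻¹ = Matrix.diagonal (fun _ => 2 * ((k:ℝ)+1) * h + 1) := by
    apply Matrix.inv_eq_right_inv
    rw [DGH, Matrix.diagonal_mul_diagonal]
    have : (fun _ : Fin 1 => 1 / (2 * ((k:ℝ)+1) * h + 1) * (2 * ((k:ℝ)+1) * h + 1))
        = fun _ => (1:ℝ) := funext fun _ => by field_simp
    rw [this, Matrix.diagonal_one]
  rw [hDinv]
  ext i j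
  have hi : ((i:ℕ):ℝ) + ((k:ℝ)+1) ≥ 1 := by
    have : (0:ℝ) ≤ ((i:ℕ):ℝ) := Nat.cast_nonneg _
    have : (0:ℝ) ≤ ((k:ℕ):ℝ) := Nat.cast_nonneg _
    linarith
  have hp : ((((i:ℕ):ℝ) + ((j:ℕ):ℝ)) * h + 1) ≠ 0 := by positivity
  have hr : ((((i:ℕ):ℝ) + ((k:ℝ)+1)) * h + 1) ≠ 0 := by positivity
  have hs : ((((j:ℕ):ℝ) + ((k:ℝ)+1)) * h + 1) ≠ 0 := by positivity
  have ht : (((k:ℝ)+1) * h) ≠ 0 := by positivity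
  have hBB : (BGH h k * Matrix.diagonal (fun _ : Fin 1 => 2 * ((k:ℝ)+1) * h + 1) * (BGH h k)ᴴ) i j
      = vGH h k i * (2 * ((k:ℝ)+1) * h + 1) * vGH h k j := by
    simp [Matrix.mul_apply, BGH, Fin.sum_univ_one, Matrix.diagonal_apply]
  have hRHS : (Matrix.diagonal (dGH h k) * genHilbert k (xGH h k x) h
      * (Matrix.diagonal (dGH h k))ᴴ) i j
      = dGH h k i * genHilbert k (xGH h k x) h i j * dGH h k j := by
    rw [Matrix.diagonal_conjTranspose]
    simp [Matrix.diagonal_mul, Matrix.mul_diagonal]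
  rw [Matrix.sub_apply, hBB, hRHS]
  by_cases hij : i = 0 ∧ j = 0
  · obtain ⟨hi0, hj0⟩ := hij
    subst hi0; subst hj0
    simp only [genHilbert, if_pos (⟨rfl, rfl⟩ : (0 : Fin (k+1)) = 0 ∧ (0 : Fin (k+1)) = 0),
      vGH, dGH, xGH, true_and, if_true, Fin.val_zero, Nat.cast_zero]
    push_cast
    field_simp
    ring
  · simp only [genHilbert, if_neg hij, vGH, dGH, xGH]
    field_simp
    ring

lemma dGH_ne_zero (hh : 0 < h) (i : Fin (k+1)) : dGH h k i ≠ 0 := by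
  have h1 : (((i:ℕ):ℝ) - ((k:ℝ)+1)) ≠ 0 := by
    have : ((i:ℕ):ℝ) < (k:ℝ) + 1 := by exact_mod_cast i.isLt
    linarith
  have h2 : ((((i:ℕ):ℝ) + ((k:ℝ)+1)) * h + 1) ≠ 0 := by positivity
  exact div_ne_zero (mul_ne_zero h1 (ne_of_gt hh)) h2

lemma genHilbert_step (hh : 0 < h) :
    ((genHilbert (k+1) x h).PosSemidef ↔ (genHilbert k (xGH h k x) h).PosSemidef)
      ∧ (0 ≤ (genHilbert (k+1) x h).det ↔ 0 ≤ (genHilbert k (xGH h k x) h).det) := by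
  have hD : (DGH h k).PosDef := by
    rw [DGH, Matrix.posDef_diagonal_iff]
    intro i
    positivity
  haveI : Invertible (DGH h k) := by
    apply (DGH h k).invertibleOfIsUnitDet
    rw [DGH, Matrix.det_diagonal]
    simp only [Finset.prod_const, Finset.card_univ, Fintype.card_fin, pow_one]
    exact isUnit_iff_ne_zero.mpr (by positivity)
  set E := Matrix.diagonal (dGH h k) with hE
  set M := genHilbert k (xGH h k x) h with hM
  have hEH : Eᴴ = E := by
    rw [hE, Matrix.diagonal_conjTranspose]
    simp
  have hdetE : E.det ≠ 0 := by
    rw [hE, Matrix.det_diagonal]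
    exact Finset.prod_ne_zero_iff.mpr fun i _ => dGH_ne_zero h k hh i
  have hEunit : IsUnit E.det := isUnit_iff_ne_zero.mpr hdetE
  have hcong : genHilbert k x h - BGH h k * (DGH h k)⁻¹ * (BGH h k)ᴴ = E * M * Eᴴ := by
    rw [hE, hM]
    exact schur_eq h k x hh
  have e3 : (E * M * Eᴴ).PosSemidef ↔ M.PosSemidef := by
    constructor
    · intro hpsd
      have h2 := hpsd.mul_mul_conjTranspose_same E⁻¹
      have : E⁻¹ * (E * M * Eᴴ) * (E⁻¹)ᴴ = M := by
        rw [hEH, Matrix.conjTranspose_nonsing_inv, hEH]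
        calc E⁻¹ * (E * M * E) * E⁻¹ = (E⁻¹ * E) * M * (E * E⁻¹) := by
              noncomm_ring
          _ = M := by rw [Matrix.nonsing_inv_mul E hEunit, Matrix.mul_nonsing_inv E hEunit,
              Matrix.one_mul, Matrix.mul_one]
      rwa [this] at h2
    · intro hpsd
      exact hpsd.mul_mul_conjTranspose_same E
  have ePSD : (genHilbert (k+1) x h).PosSemidef
      ↔ (Matrix.fromBlocks (genHilbert k x h) (BGH h k) (BGH h k)ᴴ (DGH h k)).PosSemidef := by
    rw [← genHilbert_block h k x]
    exact (Matrix.posSemidef_submatrix_equiv finSumFinEquiv).symm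
  have eDet : (genHilbert (k+1) x h).det
      = (DGH h k).det * (E.det * E.det) * M.det := by
    rw [← Matrix.det_submatrix_equiv_self finSumFinEquiv, genHilbert_block h k x,
      Matrix.det_fromBlocks₂₂, invOf_eq_nonsing_inv, hcong, Matrix.det_mul, Matrix.det_mul,
      hEH]
    ring
  constructor
  · rw [ePSD, Matrix.PosDef.fromBlocks₂₂ _ _ hD, hcong, e3]
  · rw [eDet]
    have hc : 0 < (DGH h k).det * (E.det * E.det) := by
      have h1 : 0 < (DGH h k).det := hD.det_pos
      have h2 : 0 < E.det * E.det := mul_self_pos.mpr hdetE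
      positivity
    constructor
    · intro hx
      nlinarith
    · intro hx
      positivity
  
end Step

lemma bGH_succ (h : ℝ) (hh : 0 < h) (k : ℕ) :
    bGH h (k + 1) = (bGH h k + (2 * ((k:ℝ)+1) * h + 1) / ((((k:ℝ)+1) * h) ^ 2)) *
        ((((k:ℝ)+1) * h) / (((k:ℝ)+1) * h + 1)) ^ 2 := by
  cases k with
  | zero =>
    show (2 * h + 1) / (h + 1) ^ 2 = _
    have h1 : h ≠ 0 := ne_of_gt hh
    have h2 : h + 1 ≠ 0 := by positivity
    rw [show bGH h 0 = 0 from rfl]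
    field_simp
    ring
  | succ j =>
    show bGH h (j + 2) = _
    rw [bGH]
    push_cast
    ring_nf

lemma bGH_step (h : ℝ) (hh : 0 < h) (k : ℕ) (x : ℝ) :
    bGH h (k + 1) ≤ x ↔
      bGH h k ≤ x * (((k:ℝ)+1) * h + 1) ^ 2 / ((((k:ℝ)+1) * h) ^ 2)
        - (2 * ((k:ℝ)+1) * h + 1) / ((((k:ℝ)+1) * h) ^ 2) := by
  have ht : (0:ℝ) < ((k:ℝ)+1) * h := by positivity
  have ht1 : (0:ℝ) < ((k:ℝ)+1) * h + 1 := by positivity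
  set t : ℝ := ((k:ℝ)+1) * h
  have key : x * (t + 1) ^ 2 / t ^ 2 - (2 * ((k:ℝ)+1) * h + 1) / t ^ 2 - bGH h k
      = (x - bGH h (k + 1)) * ((t + 1) / t) ^ 2 := by
    rw [bGH_succ h hh]
    field_simp
    ring
  have hc : (0:ℝ) < ((t + 1) / t) ^ 2 := by positivity
  constructor
  · intro hx
    nlinarith [mul_nonneg (sub_nonneg.mpr hx) hc.le]
  · intro hx
    have h2 : 0 ≤ (x - bGH h (k + 1)) * ((t + 1) / t) ^ 2 := by linarith
    nlinarith [(mul_nonneg_iff_of_pos_right hc).mp h2]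


lemma genHilbert_master (h : ℝ) (hh : 0 < h) :
    ∀ (k : ℕ) (x : ℝ) (f : ℕ → ℝ), f 0 = x →
    (∀ ℓ, ℓ < k →
      f (ℓ + 1) = f ℓ * (((k : ℝ) - ℓ) * h + 1) ^ 2 / (((k : ℝ) - ℓ) * h) ^ 2
        - (2 * ((k : ℝ) - ℓ) * h + 1) / (((k : ℝ) - ℓ) * h) ^ 2) →
    ((genHilbert k x h).PosSemidef ↔ 0 ≤ (genHilbert k x h).det)
      ∧ (0 ≤ (genHilbert k x h).det ↔ 0 ≤ f k)
      ∧ (0 ≤ f k ↔ bGH h k ≤ x) := by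
  intro k
  induction k with
  | zero =>
    intro x f hf0 _
    have hdiag : genHilbert 0 x h = Matrix.diagonal (fun _ : Fin 1 => x) := by
      ext i j
      fin_cases i; fin_cases j
      simp [genHilbert]
    have hdet1 : (genHilbert 0 x h).det = x := by
      rw [hdiag, Matrix.det_diagonal]; simp
    rw [hdet1, hdiag, Matrix.posSemidef_diagonal_iff, hf0, show bGH h 0 = 0 from rfl]
    exact ⟨⟨fun hp => hp 0, fun hx _ => hx⟩, Iff.rfl, Iff.rfl⟩
  | succ k ih =>
    intro x f hf0 hf
    have hx1 : f 1 = xGH h k x := by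
      have := hf 0 (Nat.succ_pos k)
      rw [hf0] at this
      rw [this, xGH]
      push_cast
      ring_nf
    have hf' : ∀ ℓ, ℓ < k →
        f (ℓ + 1 + 1) = f (ℓ + 1) * (((k : ℝ) - ℓ) * h + 1) ^ 2 / (((k : ℝ) - ℓ) * h) ^ 2
          - (2 * ((k : ℝ) - ℓ) * h + 1) / (((k : ℝ) - ℓ) * h) ^ 2 := by
      intro ℓ hℓ
      have hcast : ((k:ℝ) + 1) - ((ℓ:ℝ) + 1) = (k:ℝ) - ℓ := by ring
      have := hf (ℓ + 1) (by omega)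
      push_cast at this ⊢
      rw [hcast] at this
      exact this
    obtain ⟨I1, I2, I3⟩ := ih (xGH h k x) (fun ℓ => f (ℓ + 1)) hx1 hf'
    obtain ⟨P1, P2⟩ := genHilbert_step h k x hh
    have P3 : bGH h (k + 1) ≤ x ↔ bGH h k ≤ xGH h k x := bGH_step h hh k x
    exact ⟨P1.trans (I1.trans (I2.trans (I2.symm.trans P2.symm))),
      P2.trans I2, I3.trans P3.symm⟩


theorem genHilbert_posSemidef_iff (x h : ℝ) (hx : 0 < x) (hh : 1 ≤ h)
    (k : ℕ) (hk : 1 ≤ k)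
    (f : ℕ → ℝ) (hf0 : f 0 = x)
    (hf : ∀ ℓ, ℓ < k →
      f (ℓ + 1) = f ℓ * (((k : ℝ) - ℓ) * h + 1) ^ 2 / (((k : ℝ) - ℓ) * h) ^ 2
        - (2 * ((k : ℝ) - ℓ) * h + 1) / (((k : ℝ) - ℓ) * h) ^ 2) :
    ((genHilbert k x h).PosSemidef ↔ 0 ≤ (genHilbert k x h).det)
      ∧ (0 ≤ (genHilbert k x h).det ↔ 0 ≤ f k)
      ∧ (0 ≤ f k ↔ bGH h k ≤ x) := by
  exact genHilbert_master h (by linarith) k x f hf0 hf
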